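/- Let A, S, T be nonempty finite sets and let d₁ : (A → Z/2) → (S → Z/2) and d₂ : (S → Z/2) → (T → Z/2) be Z/2-linear maps with d₂ ∘ d₁ = 0. Suppose ker d₂ = range d₁ (i.e., the k-th cohomology vanishes), that some β : S → Z/2 is not in the range of d₁, and that d₂ is not identically zero. Define h = min over β not in range d₁ of ‖d₂β‖/‖[β]‖, and define the filling norm ‖d⁻¹‖ as the smallest c ≥ 0 such that for every β : S → Z/2 there exists α : S → Z/2 with d₂α = d₂β and ‖α‖/|S| ≤ c·‖d₂β‖/|T|. Then h = |T|/(‖d⁻¹‖·|S|). -/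

import Mathlib

/-- The support size of a `ZMod 2`-valued function on a finite set. -/
def cnorm {X : Type*} [Fintype X] (β : X → ZMod 2) : ℕ :=
  (Finset.univ.filter fun x => β x ≠ 0).card

/-- The quotient norm `‖[β]‖ = min_{α} ‖β + d₁ α‖` associated to a linear map
`d₁ : (A → ZMod 2) → (S → ZMod 2)`. -/
noncomputable def qnormGen {A S : Type*} [Fintype S]
    (d₁ : (A → ZMod 2) →ₗ[ZMod 2] (S → ZMod 2)) (β : S → ZMod 2) : ℕ :=
  sInf {m | ∃ α : A → ZMod 2, m = cnorm (β + d₁ α)}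

lemma cnorm_eq_zero_iff {X : Type*} [Fintype X] (γ : X → ZMod 2) :
    cnorm γ = 0 ↔ γ = 0 := by
  simp [cnorm, Finset.card_eq_zero, Finset.filter_eq_empty_iff, funext_iff]

lemma cnorm_zero {X : Type*} [Fintype X] : cnorm (0 : X → ZMod 2) = 0 := by
  simp [cnorm]

lemma qnorm_mem {A S : Type*} [Fintype S]
    (d₁ : (A → ZMod 2) →ₗ[ZMod 2] (S → ZMod 2)) (β : S → ZMod 2) :
    ∃ α : A → ZMod 2, qnormGen d₁ β = cnorm (β + d₁ α) := by
  have : qnormGen d₁ β ∈ {m | ∃ α : A → ZMod 2, m = cnorm (β + d₁ α)} :=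
    Nat.sInf_mem ⟨cnorm (β + d₁ 0), 0, rfl⟩
  exact this

lemma qnorm_le {A S : Type*} [Fintype S]
    (d₁ : (A → ZMod 2) →ₗ[ZMod 2] (S → ZMod 2)) (β : S → ZMod 2) (α : A → ZMod 2) :
    qnormGen d₁ β ≤ cnorm (β + d₁ α) :=
  Nat.sInf_le ⟨α, rfl⟩

/-- comparison between coboundary expansion and Gromov's filling
norm. Let `d₁`, `d₂` be consecutive `ZMod 2` coboundary maps on nonempty
finite sets `A`, `S`, `T` with `d₂ ∘ d₁ = 0`, vanishing cohomology
(`ker d₂ = range d₁`), some non-coboundary `β`, and `d₂ ≠ 0`. With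
`h = min_{β ∉ range d₁} ‖d₂β‖/‖[β]‖` and the filling norm `‖d⁻¹‖` defined as
the smallest `c ≥ 0` such that every coboundary `d₂β` has a primitive `α`
(`d₂α = d₂β`) with `‖α‖/|S| ≤ c·‖d₂β‖/|T|`, we have `h = |T|/(‖d⁻¹‖·|S|)`. -/
theorem expansion_eq_filling_norm
    {A S T : Type*} [Fintype A] [Fintype S] [Fintype T]
    [Nonempty A] [Nonempty S] [Nonempty T]
    (d₁ : (A → ZMod 2) →ₗ[ZMod 2] (S → ZMod 2))
    (d₂ : (S → ZMod 2) →ₗ[ZMod 2] (T → ZMod 2))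
    (hdd : ∀ α : A → ZMod 2, d₂ (d₁ α) = 0)
    (hker : ∀ β : S → ZMod 2, d₂ β = 0 → β ∈ Set.range d₁)
    (hex : ∃ β : S → ZMod 2, β ∉ Set.range d₁)
    (hd₂ : d₂ ≠ 0) :
    sInf {x : ℝ | ∃ β : S → ZMod 2, β ∉ Set.range d₁ ∧
        x = (cnorm (d₂ β) : ℝ) / (qnormGen d₁ β : ℝ)}
      = (Fintype.card T : ℝ) /
        (sInf {c : ℝ | 0 ≤ c ∧ ∀ β : S → ZMod 2, ∃ α : S → ZMod 2, d₂ α = d₂ β ∧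
            (cnorm α : ℝ) / (Fintype.card S : ℝ) ≤ c * (cnorm (d₂ β) : ℝ) / (Fintype.card T : ℝ)}
          * (Fintype.card S : ℝ)) := by
  classical
  have hS : (0:ℝ) < (Fintype.card S : ℝ) := by exact_mod_cast Fintype.card_pos
  have hT : (0:ℝ) < (Fintype.card T : ℝ) := by exact_mod_cast Fintype.card_pos
  -- membership characterizations
  have hmem : ∀ β : S → ZMod 2, β ∉ Set.range d₁ → d₂ β ≠ 0 :=
    fun β h hz => h (hker β hz)
  have hmem' : ∀ β : S → ZMod 2, d₂ β ≠ 0 → β ∉ Set.range d₁ := by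
    rintro β h ⟨a, rfl⟩; exact h (hdd a)
  -- positivity of the two norms on non-coboundaries
  have hqpos : ∀ β : S → ZMod 2, β ∉ Set.range d₁ → 0 < (qnormGen d₁ β : ℝ) := by
    intro β hβ
    have h0 : qnormGen d₁ β ≠ 0 := by
      intro h0
      obtain ⟨α, hα⟩ := qnorm_mem d₁ β
      rw [h0] at hα
      have hz : β + d₁ α = 0 := (cnorm_eq_zero_iff _).1 hα.symm
      have : β = d₁ (-α) := by
        rw [map_neg]
        exact eq_neg_of_add_eq_zero_left hz
      exact hβ ⟨-α, this.symm⟩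
    have : 0 < qnormGen d₁ β := Nat.pos_of_ne_zero h0
    exact_mod_cast this
  have hdpos : ∀ β : S → ZMod 2, β ∉ Set.range d₁ → 0 < (cnorm (d₂ β) : ℝ) := by
    intro β hβ
    have h1 : d₂ β ≠ 0 := hmem β hβ
    have h0 : cnorm (d₂ β) ≠ 0 := fun h0 => h1 ((cnorm_eq_zero_iff _).1 h0)
    have : 0 < cnorm (d₂ β) := Nat.pos_of_ne_zero h0
    exact_mod_cast this
  -- qnorm lower bound for any primitive
  have hqle : ∀ β α : S → ZMod 2, d₂ α = d₂ β → qnormGen d₁ β ≤ cnorm α := by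
    intro β α hα
    have hz : d₂ (α - β) = 0 := by rw [map_sub, hα, sub_self]
    obtain ⟨a, ha⟩ := hker _ hz
    have hαβ : α = β + d₁ a := by rw [ha]; abel
    have := qnorm_le d₁ β a
    rwa [← hαβ] at this
  -- the finite set of non-coboundaries
  set B : Finset (S → ZMod 2) := Finset.univ.filter (fun β => β ∉ Set.range d₁) with hB
  have hBmem : ∀ β, β ∈ B ↔ β ∉ Set.range d₁ := by intro β; simp [hB]
  have hBne : B.Nonempty := by
    obtain ⟨β, hβ⟩ := hex
    exact ⟨β, (hBmem β).2 hβ⟩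
  set f : (S → ZMod 2) → ℝ := fun β => (cnorm (d₂ β) : ℝ) / (qnormGen d₁ β : ℝ) with hf
  set g : (S → ZMod 2) → ℝ := fun β => (qnormGen d₁ β : ℝ) / (cnorm (d₂ β) : ℝ) with hg
  obtain ⟨βm, hβmB, hβm⟩ := B.exists_min_image f hBne
  obtain ⟨βc, hβcB, hβc⟩ := B.exists_max_image g hBne
  have hβmR : βm ∉ Set.range d₁ := (hBmem βm).1 hβmB
  have hβcR : βc ∉ Set.range d₁ := (hBmem βc).1 hβcB
  have hqm : 0 < (qnormGen d₁ βm : ℝ) := hqpos βm hβmR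
  have hdm : 0 < (cnorm (d₂ βm) : ℝ) := hdpos βm hβmR
  have hqc : 0 < (qnormGen d₁ βc : ℝ) := hqpos βc hβcR
  have hdc : 0 < (cnorm (d₂ βc) : ℝ) := hdpos βc hβcR
  set cstar : ℝ := (qnormGen d₁ βc : ℝ) * (Fintype.card T : ℝ) /
      ((cnorm (d₂ βc) : ℝ) * (Fintype.card S : ℝ)) with hcstar
  have hcstar_pos : 0 < cstar := by positivity
  -- cstar is a valid filling constant
  have hCmem : cstar ∈ {c : ℝ | 0 ≤ c ∧ ∀ β : S → ZMod 2, ∃ α : S → ZMod 2, d₂ α = d₂ β ∧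
      (cnorm α : ℝ) / (Fintype.card S : ℝ) ≤ c * (cnorm (d₂ β) : ℝ) / (Fintype.card T : ℝ)} := by
    refine ⟨le_of_lt hcstar_pos, ?_⟩
    intro β
    by_cases hz : d₂ β = 0
    · refine ⟨0, by simp [hz], ?_⟩
      simp [hz, cnorm_zero]
    · have hβR : β ∉ Set.range d₁ := hmem' β hz
      obtain ⟨α₀, hα₀⟩ := qnorm_mem d₁ β
      refine ⟨β + d₁ α₀, by rw [map_add, hdd, add_zero], ?_⟩
      rw [← hα₀]
      have hqβ : 0 < (qnormGen d₁ β : ℝ) := hqpos β hβR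
      have hdβ : 0 < (cnorm (d₂ β) : ℝ) := hdpos β hβR
      have hgle : g β ≤ g βc := hβc β ((hBmem β).2 hβR)
      have hkey : (qnormGen d₁ β : ℝ) * (cnorm (d₂ βc) : ℝ)
          ≤ (qnormGen d₁ βc : ℝ) * (cnorm (d₂ β) : ℝ) := by
        rw [hg, div_le_div_iff₀ hdβ hdc] at hgle
        linarith
      rw [hcstar, div_mul_eq_mul_div, div_div, div_le_div_iff₀ hS (by positivity)]
      nlinarith [hkey, hS.le, hT.le, mul_nonneg hS.le hT.le]
  -- cstar is a lower bound for valid filling constants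
  have hClb : ∀ c ∈ {c : ℝ | 0 ≤ c ∧ ∀ β : S → ZMod 2, ∃ α : S → ZMod 2, d₂ α = d₂ β ∧
      (cnorm α : ℝ) / (Fintype.card S : ℝ) ≤ c * (cnorm (d₂ β) : ℝ) / (Fintype.card T : ℝ)},
      cstar ≤ c := by
    rintro c ⟨hc0, hc⟩
    obtain ⟨α, hαd, hαle⟩ := hc βc
    have h1 : (qnormGen d₁ βc : ℝ) ≤ (cnorm α : ℝ) := by exact_mod_cast hqle βc α hαd
    have h2 : (qnormGen d₁ βc : ℝ) / (Fintype.card S : ℝ)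
        ≤ c * (cnorm (d₂ βc) : ℝ) / (Fintype.card T : ℝ) :=
      le_trans (by gcongr) hαle
    rw [div_le_div_iff₀ hS hT] at h2
    rw [hcstar, div_le_iff₀ (by positivity)]
    linarith
  -- compute the filling-norm infimum
  have hCinf : sInf {c : ℝ | 0 ≤ c ∧ ∀ β : S → ZMod 2, ∃ α : S → ZMod 2, d₂ α = d₂ β ∧
      (cnorm α : ℝ) / (Fintype.card S : ℝ) ≤ c * (cnorm (d₂ β) : ℝ) / (Fintype.card T : ℝ)}
      = cstar := by
    refine le_antisymm (csInf_le ⟨0, fun c hc => hc.1⟩ hCmem) (le_csInf ⟨cstar, hCmem⟩ hClb)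
  -- compute the expansion infimum
  have hSinf : sInf {x : ℝ | ∃ β : S → ZMod 2, β ∉ Set.range d₁ ∧
      x = (cnorm (d₂ β) : ℝ) / (qnormGen d₁ β : ℝ)} = f βm := by
    refine le_antisymm (csInf_le ⟨0, ?_⟩ ⟨βm, hβmR, rfl⟩) (le_csInf ⟨f βm, βm, hβmR, rfl⟩ ?_)
    · rintro x ⟨β, hβ, rfl⟩
      positivity
    · rintro x ⟨β, hβ, rfl⟩
      exact hβm β ((hBmem β).2 hβ)
  rw [hSinf, hCinf]
  -- final arithmetic
  have hfeq : f βm = f βc := by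
    refine le_antisymm (hβm βc hβcB) ?_
    have hgle : g βm ≤ g βc := hβc βm hβmB
    rw [hg, div_le_div_iff₀ hdm hdc] at hgle
    rw [hf, div_le_div_iff₀ hqc hqm]
    linarith
  rw [hfeq, hf, hcstar]
  field_simp
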